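/- arXiv:1204.0711 — 4 statements merged into one kernel-verified Lean document; each statement's English description precedes it below -/
import Mathlib

section
/- Let p, q be strictly positive probability distributions on a finite set X with q not a constant multiple of p, and define ψ(t) = log ∑_x p(x)^t q(x)^{1−t} and the Hoeffding distance H_r(p‖q) = sup_{0≤t<1} (−tr − ψ(t))/(1−t). Then for every r with −ψ(1) < r < −ψ(0) − ψ'(0) there exists a unique t_r ∈ (0,1) such that r = (t_r − 1)ψ'(t_r) − ψ(t_r) and H_r(p‖q) = t_r ψ'(t_r) − ψ(t_r). -/
/-- Hoeffding representation: for strictly positive probability distributions `p, q` on a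
finite set, with `q` not a constant multiple of `p`, and
`ψ(t) = log ∑ₓ p(x)^t q(x)^(1-t)`,
`H_r = sup_{0≤t<1} (-tr - ψ(t))/(1-t)`, for every `r` with `-ψ(1) < r < -ψ(0) - ψ'(0)`
there is a unique `t_r ∈ (0,1)` with `r = (t_r-1)ψ'(t_r) - ψ(t_r)` and
`H_r = t_r ψ'(t_r) - ψ(t_r)`. -/
theorem stmt_10 {X : Type*} [Fintype X] [Nonempty X] (p q : X → ℝ)
    (hp : ∀ x, 0 < p x) (hq : ∀ x, 0 < q x)
    (hp1 : ∑ x, p x = 1) (hq1 : ∑ x, q x = 1)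
    (hnprop : ¬ ∃ c : ℝ, ∀ x, q x = c * p x)
    (ψ : ℝ → ℝ) (hψ : ψ = fun t => Real.log (∑ x, p x ^ t * q x ^ (1 - t)))
    (H : ℝ → ℝ)
    (hH : H = fun r => sSup {y : ℝ | ∃ t ∈ Set.Ico (0:ℝ) 1, y = (-t * r - ψ t) / (1 - t)})
    (r : ℝ) (hr1 : -ψ 1 < r) (hr2 : r < -ψ 0 - deriv ψ 0) :
    ∃! tr : ℝ, tr ∈ Set.Ioo (0:ℝ) 1 ∧
      r = (tr - 1) * deriv ψ tr - ψ tr ∧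
      H r = tr * deriv ψ tr - ψ tr := by
  classical
  set a : X → ℝ := fun x => Real.log (p x) - Real.log (q x) with ha
  set Z : ℝ → ℝ := fun t => ∑ x, q x * Real.exp (t * a x) with hZdef
  set Z1 : ℝ → ℝ := fun t => ∑ x, q x * a x * Real.exp (t * a x) with hZ1def
  set Z2 : ℝ → ℝ := fun t => ∑ x, q x * a x ^ 2 * Real.exp (t * a x) with hZ2def
  have hZpos : ∀ t, 0 < Z t := by
    intro t
    exact Finset.sum_pos (fun x _ => mul_pos (hq x) (Real.exp_pos _)) Finset.univ_nonempty
  -- ψ = log ∘ Z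
  have hψZ : ψ = fun t => Real.log (Z t) := by
    rw [hψ]
    funext t
    congr 1
    apply Finset.sum_congr rfl
    intro x _
    rw [Real.rpow_def_of_pos (hp x), Real.rpow_def_of_pos (hq x), ← Real.exp_add]
    rw [show q x * Real.exp (t * a x) = Real.exp (Real.log (q x) + t * a x) by
      rw [Real.exp_add, Real.exp_log (hq x)]]
    congr 1
    simp only [ha]
    ring
  -- derivative facts
  have hZder : ∀ t, HasDerivAt Z (Z1 t) t := by
    intro t
    apply HasDerivAt.fun_sum
    intro x _
    have h : HasDerivAt (fun s : ℝ => q x * Real.exp (s * a x))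
        (q x * (Real.exp (t * a x) * a x)) t :=
      ((hasDerivAt_mul_const (a x) : HasDerivAt _ _ t).exp).const_mul (q x)
    exact h.congr_deriv (by ring)
  have hZ1der : ∀ t, HasDerivAt Z1 (Z2 t) t := by
    intro t
    apply HasDerivAt.fun_sum
    intro x _
    have h : HasDerivAt (fun s : ℝ => q x * a x * Real.exp (s * a x))
        (q x * a x * (Real.exp (t * a x) * a x)) t :=
      ((hasDerivAt_mul_const (a x) : HasDerivAt _ _ t).exp).const_mul (q x * a x)
    exact h.congr_deriv (by ring)
  set φ : ℝ → ℝ := fun t => Z1 t / Z t with hφdef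
  have hψder : ∀ t, HasDerivAt ψ (φ t) t := by
    intro t
    rw [hψZ]
    exact (hZder t).log (hZpos t).ne'
  have hderivψ : ∀ t, deriv ψ t = φ t := fun t => (hψder t).deriv
  set ψ'' : ℝ → ℝ := fun t => (Z2 t * Z t - Z1 t * Z1 t) / (Z t) ^ 2 with hψ''def
  have hφder : ∀ t, HasDerivAt φ (ψ'' t) t := by
    intro t
    exact (hZ1der t).div (hZder t) (hZpos t).ne'
  -- a is not constant
  have hne : ∃ x y : X, a x ≠ a y := by
    by_contra h
    push_neg at h
    apply hnprop
    obtain ⟨x0⟩ := ‹Nonempty X›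
    refine ⟨Real.exp (-a x0), fun x => ?_⟩
    have : a x = a x0 := h x x0
    have hx : Real.log (q x) = Real.log (p x) - a x0 := by
      simp only [ha] at this ⊢; linarith
    calc q x = Real.exp (Real.log (q x)) := (Real.exp_log (hq x)).symm
    _ = Real.exp (-a x0) * p x := by
        rw [hx, sub_eq_add_neg, Real.exp_add, Real.exp_log (hp x)]; ring
  -- strict Cauchy-Schwarz: Z1² < Z2 * Z
  have hCS : ∀ t, Z1 t * Z1 t < Z2 t * Z t := by
    intro t
    set w : X → ℝ := fun x => q x * Real.exp (t * a x) with hw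
    have hwpos : ∀ x, 0 < w x := fun x => mul_pos (hq x) (Real.exp_pos _)
    have hZt : Z t = ∑ x, w x := rfl
    have hZ1t : Z1 t = ∑ x, w x * a x := by
      rw [hZ1def]; exact Finset.sum_congr rfl fun x _ => by simp only [hw]; ring
    have hZ2t : Z2 t = ∑ x, w x * a x ^ 2 := by
      rw [hZ2def]; exact Finset.sum_congr rfl fun x _ => by simp only [hw]; ring
    have expand : ∑ x, ∑ y, w x * w y * (a x - a y) ^ 2
        = 2 * (Z2 t * Z t) - 2 * (Z1 t * Z1 t) := by
      have h1 : ∀ x : X, ∑ y, w x * w y * (a x - a y) ^ 2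
          = (w x * a x ^ 2) * Z t - (2 * (w x * a x)) * Z1 t + w x * Z2 t := by
        intro x
        rw [hZt, hZ1t, hZ2t]
        simp only [Finset.mul_sum, ← Finset.sum_sub_distrib, ← Finset.sum_add_distrib]
        exact Finset.sum_congr rfl fun y _ => by ring
      rw [Finset.sum_congr rfl fun x _ => h1 x]
      rw [Finset.sum_add_distrib, Finset.sum_sub_distrib, ← Finset.sum_mul, ← Finset.sum_mul,
        ← Finset.sum_mul, ← Finset.mul_sum, ← hZt, ← hZ1t, ← hZ2t]
      ring
    have hpos : 0 < ∑ x, ∑ y, w x * w y * (a x - a y) ^ 2 := by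
      obtain ⟨x0, y0, hxy⟩ := hne
      apply Finset.sum_pos'
      · intro x _
        exact Finset.sum_nonneg fun y _ =>
          mul_nonneg (mul_nonneg (hwpos x).le (hwpos y).le) (sq_nonneg _)
      · refine ⟨x0, Finset.mem_univ _, Finset.sum_pos' (fun y _ =>
          mul_nonneg (mul_nonneg (hwpos x0).le (hwpos y).le) (sq_nonneg _))
          ⟨y0, Finset.mem_univ _, ?_⟩⟩
        have h2 : 0 < (a x0 - a y0) ^ 2 := by
          have := sub_ne_zero_of_ne hxy
          positivity
        exact mul_pos (mul_pos (hwpos x0) (hwpos y0)) h2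
    rw [expand] at hpos
    linarith
  have hpsi2pos : ∀ t, 0 < ψ'' t := by
    intro t
    have h1 := hCS t
    have h2 := hZpos t
    rw [hψ''def]
    exact div_pos (by linarith) (by positivity)
  have hφmono : StrictMono φ := by
    apply strictMono_of_deriv_pos
    intro t
    rw [(hφder t).deriv]
    exact hpsi2pos t
  have hψcont : Continuous ψ :=
    continuous_iff_continuousAt.2 fun t => (hψder t).differentiableAt.continuousAt
  set g : ℝ → ℝ := fun t => (t - 1) * φ t - ψ t with hgdef
  have hgder : ∀ t, HasDerivAt g ((t - 1) * ψ'' t) t := by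
    intro t
    have h1 : HasDerivAt (fun s : ℝ => (s - 1) * φ s) (1 * φ t + (t - 1) * ψ'' t) t :=
      ((hasDerivAt_id t).sub_const 1).mul (hφder t)
    have h2 : HasDerivAt (fun s : ℝ => (s - 1) * φ s - ψ s) (1 * φ t + (t - 1) * ψ'' t - φ t) t :=
      h1.sub (hψder t)
    convert h2 using 1
    ring
  have hgcont : Continuous g :=
    continuous_iff_continuousAt.2 fun t => (hgder t).differentiableAt.continuousAt
  have hganti : StrictAntiOn g (Set.Iic 1) := by
    apply strictAntiOn_of_deriv_neg (convex_Iic 1) hgcont.continuousOn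
    intro t ht
    rw [interior_Iic] at ht
    rw [(hgder t).deriv]
    have h1 : t - 1 < 0 := by simpa [sub_neg] using ht
    exact mul_neg_of_neg_of_pos h1 (hpsi2pos t)
  have hg1 : g 1 = -ψ 1 := by simp [hgdef]
  have hg0 : g 0 = -ψ 0 - deriv ψ 0 := by
    rw [hgdef, hderivψ 0]
    simp only
    ring
  have hivt : r ∈ g '' Set.Ioo (0:ℝ) 1 := by
    apply intermediate_value_Ioo' (by norm_num : (0:ℝ) ≤ 1) hgcont.continuousOn
    rw [hg1, hg0]
    exact ⟨hr1, hr2⟩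
  obtain ⟨tr, htr, hgtr⟩ := hivt
  have hrval : r = (tr - 1) * φ tr - ψ tr := hgtr.symm
  have htan : ∀ s u : ℝ, ψ s + φ s * (u - s) ≤ ψ u := by
    intro s u
    rcases lt_trichotomy s u with h | h | h
    · obtain ⟨c, hc, hceq⟩ := exists_hasDerivAt_eq_slope ψ φ h hψcont.continuousOn
        (fun x _ => hψder x)
      have hsc : φ s < φ c := hφmono hc.1
      have h3 : ψ u - ψ s = φ c * (u - s) := by
        rw [← div_eq_iff (by intro h'; apply absurd h; rw [sub_eq_zero] at h'; simp [h'] : u - s ≠ 0)]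
        exact hceq.symm
      nlinarith
    · subst h; simp
    · obtain ⟨c, hc, hceq⟩ := exists_hasDerivAt_eq_slope ψ φ h hψcont.continuousOn
        (fun x _ => hψder x)
      have hsc : φ c < φ s := hφmono hc.2
      have h3 : ψ s - ψ u = φ c * (s - u) := by
        rw [← div_eq_iff (by intro h'; apply absurd h; rw [sub_eq_zero] at h'; simp [h'] : s - u ≠ 0)]
        exact hceq.symm
      nlinarith
  have h1tr : (0:ℝ) < 1 - tr := by linarith [htr.2]
  have hftr : (-tr * r - ψ tr) / (1 - tr) = tr * φ tr - ψ tr := by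
    rw [hrval]
    field_simp
    ring
  subst hH
  refine ⟨tr, ⟨htr, ?_, ?_⟩, ?_⟩
  · rw [hderivψ tr]
    exact hrval
  · rw [hderivψ tr]
    have hgreat : IsGreatest
        {y : ℝ | ∃ t ∈ Set.Ico (0:ℝ) 1, y = (-t * r - ψ t) / (1 - t)}
        (tr * φ tr - ψ tr) := by
      constructor
      · exact ⟨tr, ⟨htr.1.le, htr.2⟩, hftr.symm⟩
      · rintro y ⟨t, ht, rfl⟩
        have h1t : (0:ℝ) < 1 - t := by linarith [ht.2]
        rw [div_le_iff₀ h1t, hrval]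
        nlinarith [htan tr t]
    exact hgreat.csSup_eq
  · rintro t' ⟨ht', heq, -⟩
    rw [hderivψ t'] at heq
    have hgg : g t' = g tr := by rw [hgtr]; exact heq.symm
    exact hganti.injOn (Set.mem_Iic.2 ht'.2.le) (Set.mem_Iic.2 htr.2.le) hgg
end

section
/- Let p be a probability distribution on a finite set X with supp p ⊆ supp q for a positive measure q. Then lim_{r↘0} H_r(p‖q) = H_0(p‖q) = D(p‖q), where H_r(p‖q) = sup_{0≤t<1} (−tr − log ∑_x p(x)^t q(x)^{1−t})/(1−t) and D(p‖q) = ∑_x p(x) log(p(x)/q(x)). -/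
open Finset in
/-- For a probability measure `p` and a positive measure `q` on a finite set with
`supp p ⊆ supp q`, the Hoeffding distances satisfy `lim_{r↘0} H_r(p‖q) = H_0(p‖q) = D(p‖q)`. -/
theorem stmt_12 {X : Type*} [Fintype X] [DecidableEq X] (p q : X → ℝ)
    (hp : ∀ x, 0 ≤ p x) (hq : ∀ x, 0 ≤ q x)
    (hp1 : ∑ x, p x = 1)
    (hsupp : ∀ x, 0 < p x → 0 < q x)
    (ψ : ℝ → ℝ)
    (hψ : ψ = fun t => Real.log (∑ x ∈ univ.filter (fun x => 0 < p x),
      p x ^ t * q x ^ (1 - t)))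
    (H : ℝ → ℝ)
    (hH : H = fun r => sSup {y : ℝ | ∃ t ∈ Set.Ico (0:ℝ) 1, y = (-t * r - ψ t) / (1 - t)}) :
    Filter.Tendsto H (nhdsWithin 0 (Set.Ioi 0)) (nhds (H 0)) ∧
    H 0 = ∑ x ∈ univ.filter (fun x => 0 < p x), p x * Real.log (p x / q x) := by
  classical
  set S : Finset X := univ.filter (fun x => 0 < p x) with hSdef
  have hpS : ∀ x ∈ S, 0 < p x := fun x hx => (mem_filter.mp hx).2
  have hqS : ∀ x ∈ S, 0 < q x := fun x hx => hsupp x (hpS x hx)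
  set D : ℝ := ∑ x ∈ S, p x * Real.log (p x / q x) with hDdef
  have hsum1 : ∑ x ∈ S, p x = 1 := by
    rw [← hp1]
    refine Finset.sum_subset (filter_subset _ _) (fun x _ hx => ?_)
    have h : ¬ 0 < p x := fun h => hx (mem_filter.mpr ⟨mem_univ x, h⟩)
    linarith [hp x]
  set g : ℝ → ℝ := fun t => ∑ x ∈ S, p x ^ t * q x ^ (1 - t) with hgdef
  have hψg : ∀ t, ψ t = Real.log (g t) := fun t => by rw [hψ]
  have hg1 : g 1 = 1 := by
    rw [hgdef]
    simp only [Real.rpow_one, sub_self, Real.rpow_zero, mul_one]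
    exact hsum1
  have hψ1 : ψ 1 = 0 := by rw [hψg, hg1, Real.log_one]
  -- Jensen: (t - 1) * D ≤ ψ t
  have hkey : ∀ t : ℝ, (t - 1) * D ≤ ψ t := by
    intro t
    have hterm : ∀ x ∈ S, p x ^ t * q x ^ (1 - t) = p x * (q x / p x) ^ (1 - t) := by
      intro x hx
      have hp0 := hpS x hx
      have hq0 := hqS x hx
      rw [Real.div_rpow hq0.le hp0.le, Real.rpow_sub hp0, Real.rpow_sub hq0]
      have h1 : p x ^ (t:ℝ) ≠ 0 := (Real.rpow_pos_of_pos hp0 t).ne'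
      have h2 : q x ^ (t:ℝ) ≠ 0 := (Real.rpow_pos_of_pos hq0 t).ne'
      field_simp
      ring
      simp
    have hj := (strictConcaveOn_log_Ioi.concaveOn).le_map_sum
      (t := S) (w := p) (p := fun x => (q x / p x) ^ (1 - t))
      (fun x hx => (hpS x hx).le) hsum1
      (fun x hx => Real.rpow_pos_of_pos (div_pos (hqS x hx) (hpS x hx)) _)
    have hL : ∑ x ∈ S, p x • Real.log ((q x / p x) ^ (1 - t)) = (1 - t) * (-D) := by
      rw [hDdef, ← Finset.sum_neg_distrib, Finset.mul_sum]
      refine Finset.sum_congr rfl (fun x hx => ?_)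
      have hp0 := hpS x hx
      have hq0 := hqS x hx
      rw [smul_eq_mul, Real.log_rpow (div_pos hq0 hp0),
        Real.log_div hq0.ne' hp0.ne', Real.log_div hp0.ne' hq0.ne']
      ring
    have hR : ∑ x ∈ S, p x • (q x / p x) ^ (1 - t) = g t := by
      rw [hgdef]
      exact (Finset.sum_congr rfl (fun x hx => by rw [smul_eq_mul, hterm x hx])).symm
    rw [hL, hR] at hj
    rw [hψg]
    nlinarith [hj]
  -- upper bound D on the defining set, for r ≥ 0
  have hub : ∀ r : ℝ, 0 ≤ r → ∀ y ∈ {y : ℝ | ∃ t ∈ Set.Ico (0:ℝ) 1, y = (-t * r - ψ t) / (1 - t)},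
      y ≤ D := by
    rintro r hr y ⟨t, ⟨ht0, ht1⟩, rfl⟩
    have hB : (0:ℝ) < 1 - t := by linarith
    rw [div_le_iff₀ hB]
    have h1 : -t * r ≤ 0 := by nlinarith
    have h2 := hkey t
    nlinarith
  have hbdd : ∀ r : ℝ, 0 ≤ r →
      BddAbove {y : ℝ | ∃ t ∈ Set.Ico (0:ℝ) 1, y = (-t * r - ψ t) / (1 - t)} :=
    fun r hr => ⟨D, fun y hy => hub r hr y hy⟩
  have hne : ∀ r : ℝ, ({y : ℝ | ∃ t ∈ Set.Ico (0:ℝ) 1, y = (-t * r - ψ t) / (1 - t)}).Nonempty :=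
    fun r => ⟨(-(0:ℝ) * r - ψ 0) / (1 - 0), 0, ⟨le_refl 0, zero_lt_one⟩, rfl⟩
  -- derivative of ψ at 1 is D
  have hgd : HasDerivAt g D 1 := by
    rw [hDdef, hgdef]
    refine HasDerivAt.fun_sum (fun x hx => ?_)
    have hp0 := hpS x hx
    have hq0 := hqS x hx
    have hA : HasDerivAt (fun t : ℝ => p x ^ t) (p x ^ (1:ℝ) * Real.log (p x)) 1 :=
      (Real.hasStrictDerivAt_const_rpow hp0 1).hasDerivAt
    have hB : HasDerivAt (fun t : ℝ => q x ^ (1 - t))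
        ((q x ^ ((1:ℝ) - 1) * Real.log (q x)) * (0 - 1)) 1 :=
      HasDerivAt.comp 1 (Real.hasStrictDerivAt_const_rpow hq0 (1 - 1)).hasDerivAt
        ((hasDerivAt_const 1 (1:ℝ)).sub (hasDerivAt_id 1))
    have hprod := hA.fun_mul hB
    convert hprod using 1
    · rfl
    simp only [Real.rpow_one, sub_self, Real.rpow_zero, one_mul, mul_one]
    rw [Real.log_div hp0.ne' hq0.ne']
    ring
  have hψd : HasDerivAt ψ D 1 := by
    have h := hgd.log (by rw [hg1]; norm_num)
    rw [hg1, div_one] at h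
    have heq : ψ = fun t => Real.log (g t) := funext hψg
    rw [heq]
    exact h
  -- slope limit from the left
  have hslope : Filter.Tendsto (fun t : ℝ => (-t * 0 - ψ t) / (1 - t))
      (nhdsWithin 1 (Set.Iio 1)) (nhds D) := by
    have h := hasDerivAt_iff_tendsto_slope.mp hψd
    have hmono : nhdsWithin (1:ℝ) (Set.Iio 1) ≤ nhdsWithin 1 {(1:ℝ)}ᶜ :=
      nhdsWithin_mono 1 (fun x hx => ne_of_lt hx)
    refine (h.mono_left hmono).congr (fun t => ?_)
    rw [slope_def_field, hψ1, sub_zero,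
      show -t * 0 - ψ t = -ψ t from by ring,
      show (1:ℝ) - t = -(t - 1) from by ring, ← neg_div_neg_eq (ψ t) (t - 1)]
  -- H 0 = D
  have hH0 : H 0 = D := by
    rw [hH]
    dsimp only
    refine le_antisymm (csSup_le (hne 0) (hub 0 le_rfl)) ?_
    refine le_of_tendsto hslope ?_
    filter_upwards [Ioo_mem_nhdsLT_of_mem
      (Set.mem_Ioc.mpr ⟨zero_lt_one, le_refl (1:ℝ)⟩)] with t ht
    exact le_csSup (hbdd 0 le_rfl) ⟨t, ⟨ht.1.le, ht.2⟩, rfl⟩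
  have hmain : Filter.Tendsto H (nhdsWithin 0 (Set.Ioi 0)) (nhds D) := by
    rw [tendsto_order]
    constructor
    · intro a ha
      have hcpos : (0:ℝ) < (D - a) / 2 := by linarith
      have hev : ∀ᶠ t in nhdsWithin (1:ℝ) (Set.Iio 1),
          ((a + D) / 2 < (-t * 0 - ψ t) / (1 - t)) ∧ t ∈ Set.Ioo (0:ℝ) 1 := by
        filter_upwards [hslope.eventually (eventually_gt_nhds (show (a + D)/2 < D by linarith)),
          Ioo_mem_nhdsLT_of_mem (Set.mem_Ioc.mpr ⟨zero_lt_one, le_refl (1:ℝ)⟩)] with t h1 h2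
        exact ⟨h1, h2⟩
      obtain ⟨t₀, hm, ht₀⟩ := hev.exists
      have hB : (0:ℝ) < 1 - t₀ := by linarith [ht₀.2]
      have hδ : (0:ℝ) < (D - a) / 2 * (1 - t₀) := mul_pos hcpos hB
      have hm' : (a + D) / 2 * (1 - t₀) < -ψ t₀ := by
        rw [lt_div_iff₀ hB] at hm
        linarith [hm]
      filter_upwards [Ioo_mem_nhdsGT_of_mem
        (Set.mem_Ico.mpr ⟨le_refl (0:ℝ), hδ⟩)] with r hr
      have hel := le_csSup (hbdd r hr.1.le)
        (Set.mem_setOf.mpr ⟨t₀, ⟨ht₀.1.le, ht₀.2⟩, rfl⟩ :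
          (-t₀ * r - ψ t₀) / (1 - t₀) ∈
            {y : ℝ | ∃ t ∈ Set.Ico (0:ℝ) 1, y = (-t * r - ψ t) / (1 - t)})
      have hHr : H r = sSup {y : ℝ | ∃ t ∈ Set.Ico (0:ℝ) 1, y = (-t * r - ψ t) / (1 - t)} := by
        rw [hH]
      rw [hHr]
      refine lt_of_lt_of_le ?_ hel
      rw [lt_div_iff₀ hB]
      have ht₀r : t₀ * r ≤ r := by nlinarith [ht₀.1.le, ht₀.2.le, hr.1.le]
      nlinarith [hr.2, hm']
    · intro b hb
      filter_upwards [self_mem_nhdsWithin] with r hr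
      have hHr : H r = sSup {y : ℝ | ∃ t ∈ Set.Ico (0:ℝ) 1, y = (-t * r - ψ t) / (1 - t)} := by
        rw [hH]
      rw [hHr]
      exact lt_of_le_of_lt (csSup_le (hne r) (hub r (le_of_lt hr))) hb
  refine ⟨?_, hH0⟩
  rw [hH0]
  exact hmain
end

section
/- Let ρ, σ be density operators on a finite-dimensional Hilbert space and ε ∈ (0,1). Then the optimal type II error β_ε = min{Tr σT : 0 ≤ T ≤ I, Tr ρ(I−T) ≤ ε} satisfies β_ε = sup_{λ≥0} { (1−ε)λ − Tr(λρ − σ)_+ } = sup_{λ≥0} { (λ+1)/2 − ½‖λρ − σ‖₁ − λε }, where (X)_+ denotes the positive part of a self-adjoint operator X. -/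
open scoped ComplexOrder Matrix

noncomputable section

/-- Power of a positive semidefinite matrix computed on its support
(`0^t := 0` for zero eigenvalues). -/
def Matrix.PosSemidef.rpow {d : ℕ} {A : Matrix (Fin d) (Fin d) ℂ}
    (hA : A.PosSemidef) (t : ℝ) : Matrix (Fin d) (Fin d) ℂ :=
  (hA.1.eigenvectorUnitary : Matrix (Fin d) (Fin d) ℂ) *
    Matrix.diagonal (fun i =>
      ((if hA.1.eigenvalues i = 0 then (0:ℝ) else hA.1.eigenvalues i ^ t) : ℂ)) *
    (hA.1.eigenvectorUnitary : Matrix (Fin d) (Fin d) ℂ)ᴴ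

/-- The positive semidefinite square root (the definition Mathlib had in December 2024). -/
def Matrix.PosSemidef.sqrt {n : Type*} [Fintype n] [DecidableEq n] {A : Matrix n n ℂ}
    (hA : A.PosSemidef) : Matrix n n ℂ :=
  (hA.1.eigenvectorUnitary : Matrix n n ℂ) *
    Matrix.diagonal (fun i => ((Real.sqrt (hA.1.eigenvalues i) : ℝ) : ℂ)) *
    (star hA.1.eigenvectorUnitary : Matrix n n ℂ)

/-- The trace norm `‖X‖₁ = Tr √(XᴴX)`. -/
def Matrix.traceNorm {d : ℕ} (X : Matrix (Fin d) (Fin d) ℂ) : ℝ :=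
  ((Matrix.posSemidef_conjTranspose_mul_self X).sqrt.trace).re

/-- The `n`-fold tensor power of a matrix, realized on the index set `Fin n → Fin d`. -/
def Matrix.tensorPow {d : ℕ} (A : Matrix (Fin d) (Fin d) ℂ) (n : ℕ) :
    Matrix (Fin n → Fin d) (Fin n → Fin d) ℂ :=
  Matrix.of fun x y => ∏ i, A (x i) (y i)

/-- Spectral projection of a Hermitian matrix onto the strictly positive part of its
spectrum. -/
def Matrix.IsHermitian.projPos {d : ℕ} {A : Matrix (Fin d) (Fin d) ℂ}
    (hA : A.IsHermitian) : Matrix (Fin d) (Fin d) ℂ :=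
  (hA.eigenvectorUnitary : Matrix (Fin d) (Fin d) ℂ) *
    Matrix.diagonal (fun i => ((if 0 < hA.eigenvalues i then (1:ℝ) else 0) : ℂ)) *
    (hA.eigenvectorUnitary : Matrix (Fin d) (Fin d) ℂ)ᴴ

/-- Spectral projection of a Hermitian matrix onto the nonnegative part of its spectrum. -/
def Matrix.IsHermitian.projNonneg {d : ℕ} {A : Matrix (Fin d) (Fin d) ℂ}
    (hA : A.IsHermitian) : Matrix (Fin d) (Fin d) ℂ :=
  (hA.eigenvectorUnitary : Matrix (Fin d) (Fin d) ℂ) *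
    Matrix.diagonal (fun i => ((if 0 ≤ hA.eigenvalues i then (1:ℝ) else 0) : ℂ)) *
    (hA.eigenvectorUnitary : Matrix (Fin d) (Fin d) ℂ)ᴴ

/-- The positive part `(X)_+ = ½(X + |X|)` of a matrix, with `|X| = √(XᴴX)`. -/
def Matrix.posPart' {d : ℕ} (X : Matrix (Fin d) (Fin d) ℂ) : Matrix (Fin d) (Fin d) ℂ :=
  (2:ℂ)⁻¹ • (X + (Matrix.posSemidef_conjTranspose_mul_self X).sqrt)

/-- The matrix logarithm on the support (`log* 0 := 0`). -/
def Matrix.PosSemidef.logStar {d : ℕ} {A : Matrix (Fin d) (Fin d) ℂ}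
    (hA : A.PosSemidef) : Matrix (Fin d) (Fin d) ℂ :=
  (hA.1.eigenvectorUnitary : Matrix (Fin d) (Fin d) ℂ) *
    Matrix.diagonal (fun i =>
      ((if hA.1.eigenvalues i = 0 then (0:ℝ) else Real.log (hA.1.eigenvalues i)) : ℂ)) *
    (hA.1.eigenvectorUnitary : Matrix (Fin d) (Fin d) ℂ)ᴴ

end

section SqrtAux
namespace HypTest
open scoped ComplexOrder Matrix MatrixOrder
variable {d : ℕ}
lemma sqrt_eq_cfc_sqrt {C : Matrix (Fin d) (Fin d) ℂ} (hC : C.PosSemidef) :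
    hC.sqrt = CFC.sqrt C := by
  rw [CFC.sqrt_eq_real_sqrt C hC.nonneg, cfcₙ_eq_cfc, hC.1.cfc_eq, Matrix.IsHermitian.cfc,
    Unitary.conjStarAlgAut_apply]
  rfl
lemma sqrt_mul_self' {C : Matrix (Fin d) (Fin d) ℂ} (hC : C.PosSemidef) :
    hC.sqrt * hC.sqrt = C := by
  rw [sqrt_eq_cfc_sqrt]; exact CFC.sqrt_mul_sqrt_self C hC.nonneg
lemma posSemidef_sqrt' {C : Matrix (Fin d) (Fin d) ℂ} (hC : C.PosSemidef) :
    hC.sqrt.PosSemidef := by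
  rw [sqrt_eq_cfc_sqrt]; exact Matrix.nonneg_iff_posSemidef.mp (CFC.sqrt_nonneg C)
lemma eq_sqrt_of_sq_eq {B C : Matrix (Fin d) (Fin d) ℂ} (hB : B.PosSemidef) (hC : C.PosSemidef)
    (h : B ^ 2 = C) : B = hC.sqrt := by
  rw [sqrt_eq_cfc_sqrt]; exact (CFC.sqrt_unique (by rw [← h, sq]) hB.nonneg).symm
end HypTest
end SqrtAux

noncomputable section Aux
namespace HypTest

open scoped ComplexOrder Matrix

variable {d : ℕ} {X A B M T : Matrix (Fin d) (Fin d) ℂ}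

/-- functional calculus by hand -/
def herm (hX : X.IsHermitian) (f : ℝ → ℝ) : Matrix (Fin d) (Fin d) ℂ :=
  (hX.eigenvectorUnitary : Matrix (Fin d) (Fin d) ℂ) *
    Matrix.diagonal (fun i => ((f (hX.eigenvalues i)) : ℂ)) *
    (hX.eigenvectorUnitary : Matrix (Fin d) (Fin d) ℂ)ᴴ

lemma star_unitary (hX : X.IsHermitian) :
    (hX.eigenvectorUnitary : Matrix (Fin d) (Fin d) ℂ)ᴴ *
      (hX.eigenvectorUnitary : Matrix (Fin d) (Fin d) ℂ) = 1 := by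
  rw [← Matrix.star_eq_conjTranspose]
  exact (Matrix.mem_unitaryGroup_iff').mp hX.eigenvectorUnitary.2

lemma herm_mul (hX : X.IsHermitian) (f g : ℝ → ℝ) :
    herm hX f * herm hX g = herm hX (fun t => f t * g t) := by
  set U : Matrix (Fin d) (Fin d) ℂ := (hX.eigenvectorUnitary : Matrix (Fin d) (Fin d) ℂ)
  unfold herm
  rw [Matrix.mul_assoc (U * _) Uᴴ, ← Matrix.mul_assoc Uᴴ, ← Matrix.mul_assoc Uᴴ,
    star_unitary hX, Matrix.one_mul, Matrix.mul_assoc U, ← Matrix.mul_assoc _ _ Uᴴ,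
    Matrix.diagonal_mul_diagonal, ← Matrix.mul_assoc]
  congr 2
  ext i
  push_cast
  ring

lemma herm_isHermitian (hX : X.IsHermitian) (f : ℝ → ℝ) : (herm hX f).IsHermitian := by
  unfold herm
  exact Matrix.isHermitian_mul_mul_conjTranspose _
    (Matrix.isHermitian_diagonal_of_self_adjoint _
      (funext fun i => Complex.conj_ofReal _))

lemma herm_posSemidef (hX : X.IsHermitian) {f : ℝ → ℝ} (hf : ∀ t, 0 ≤ f t) :
    (herm hX f).PosSemidef := by
  unfold herm
  rw [← Matrix.star_eq_conjTranspose]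
  apply Matrix.PosSemidef.mul_mul_conjTranspose_same
  exact Matrix.posSemidef_diagonal_iff.mpr fun i => by
      simpa using Complex.zero_le_real.mpr (hf _)

lemma herm_trace (hX : X.IsHermitian) (f : ℝ → ℝ) :
    (herm hX f).trace = ∑ i, ((f (hX.eigenvalues i) : ℂ)) := by
  unfold herm
  rw [Matrix.trace_mul_cycle, star_unitary hX, Matrix.one_mul, Matrix.trace_diagonal]

lemma herm_add (hX : X.IsHermitian) (f g : ℝ → ℝ) :
    herm hX f + herm hX g = herm hX (fun t => f t + g t) := by
  unfold herm
  rw [← Matrix.add_mul, ← Matrix.mul_add, Matrix.diagonal_add]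
  congr 2
  ext i
  push_cast
  ring

lemma herm_sub (hX : X.IsHermitian) (f g : ℝ → ℝ) :
    herm hX f - herm hX g = herm hX (fun t => f t - g t) := by
  unfold herm
  rw [← Matrix.sub_mul, ← Matrix.mul_sub, Matrix.diagonal_sub]
  congr 2
  ext i
  push_cast
  ring

lemma herm_id (hX : X.IsHermitian) : herm hX (fun t => t) = X := by
  conv_rhs => rw [hX.spectral_theorem]
  rfl

lemma herm_smul (hX : X.IsHermitian) (c : ℝ) (f : ℝ → ℝ) :
    (c : ℂ) • herm hX f = herm hX (fun t => c * f t) := by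
  unfold herm
  rw [← Matrix.smul_mul, ← Matrix.mul_smul]
  congr 2
  ext i j
  simp only [Matrix.smul_apply, Matrix.diagonal_apply, smul_eq_mul]
  split_ifs with h
  · push_cast; ring
  · simp

lemma herm_one (hX : X.IsHermitian) : herm hX (fun _ => 1) = 1 := by
  unfold herm
  have : (Matrix.diagonal fun i : Fin d => (((1:ℝ) : ℂ))) = 1 := by
    rw [← Matrix.diagonal_one]; norm_num
  rw [this, Matrix.mul_one, ← Matrix.star_eq_conjTranspose]
  exact (Matrix.mem_unitaryGroup_iff).mp hX.eigenvectorUnitary.2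

lemma herm_sqrt_abs (hX : X.IsHermitian) :
    (Matrix.posSemidef_conjTranspose_mul_self X).sqrt = herm hX (fun t => |t|) := by
  symm
  apply eq_sqrt_of_sq_eq (herm_posSemidef hX fun t => abs_nonneg t)
  rw [sq, herm_mul]
  have : (fun t => |t| * |t|) = fun t : ℝ => t * t := by ext t; rw [abs_mul_abs_self]
  rw [this, ← herm_mul, herm_id, hX.eq]

lemma posPart'_eq (hX : X.IsHermitian) :
    Matrix.posPart' X = herm hX (fun t => max t 0) := by
  unfold Matrix.posPart'
  rw [herm_sqrt_abs hX]
  nth_rewrite 1 [← herm_id hX]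
  rw [herm_add]
  have h2 : ((2:ℂ)⁻¹) = (((2:ℝ)⁻¹ : ℝ) : ℂ) := by norm_num
  rw [h2, herm_smul]
  have hfun : (fun t : ℝ => (2:ℝ)⁻¹ * (t + |t|)) = (fun t => max t 0) := by
    funext t
    rw [max_def]
    split_ifs with h
    · rw [abs_of_nonpos (by linarith)]; ring
    · rw [abs_of_pos (by push_neg at h; linarith)]; ring
  rw [hfun]

lemma traceNorm_eq (hX : X.IsHermitian) :
    Matrix.traceNorm X = ∑ i, |hX.eigenvalues i| := by
  unfold Matrix.traceNorm
  rw [herm_sqrt_abs hX, herm_trace]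
  rw [Complex.re_sum]
  simp

lemma psd_trace_re_nonneg (hM : M.PosSemidef) : 0 ≤ M.trace.re := by
  exact (Complex.le_def.mp hM.trace_nonneg).1

lemma trace_mul_re_nonneg (hA : A.PosSemidef) (hB : B.PosSemidef) :
    0 ≤ ((A * B).trace).re := by
  have h1 : A * B = hA.sqrt * (hA.sqrt * B) := by
    rw [← Matrix.mul_assoc, sqrt_mul_self' hA]
  rw [h1]
  rw [Matrix.trace_mul_comm hA.sqrt (hA.sqrt * B)]
  have h2 := hB.mul_mul_conjTranspose_same hA.sqrt
  rw [(posSemidef_sqrt' hA).1.eq] at h2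
  exact psd_trace_re_nonneg h2

lemma herm_trace_re (hX : X.IsHermitian) (f : ℝ → ℝ) :
    ((herm hX f).trace).re = ∑ i, f (hX.eigenvalues i) := by
  rw [herm_trace, Complex.re_sum]
  simp

lemma trace_mul_herm_re (hX : X.IsHermitian) (g : ℝ → ℝ) :
    ((X * herm hX g).trace).re = ∑ i, hX.eigenvalues i * g (hX.eigenvalues i) := by
  nth_rewrite 1 [← herm_id hX]
  rw [herm_mul, herm_trace_re]

/-- a test -/
def IsTest (T : Matrix (Fin d) (Fin d) ℂ) : Prop := T.PosSemidef ∧ (1 - T).PosSemidef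

lemma isTest_herm (hX : X.IsHermitian) {f : ℝ → ℝ} (h0 : ∀ t, 0 ≤ f t) (h1 : ∀ t, f t ≤ 1) :
    IsTest (herm hX f) := by
  constructor
  · exact herm_posSemidef hX h0
  · rw [← herm_one hX, herm_sub]
    exact herm_posSemidef hX fun t => by linarith [h1 t]

lemma projPos_eq (hX : X.IsHermitian) :
    hX.projPos = herm hX (fun t => if 0 < t then 1 else 0) := by
  unfold Matrix.IsHermitian.projPos herm
  have : (fun i => (if 0 < hX.eigenvalues i then ((1:ℝ):ℂ) else (0:ℂ)))
      = (fun i => (((if 0 < hX.eigenvalues i then (1:ℝ) else 0) : ℝ) : ℂ)) := by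
    funext i; split_ifs <;> norm_num
  rw [this]

lemma projNonneg_eq (hX : X.IsHermitian) :
    hX.projNonneg = herm hX (fun t => if 0 ≤ t then 1 else 0) := by
  unfold Matrix.IsHermitian.projNonneg herm
  have : (fun i => (if 0 ≤ hX.eigenvalues i then ((1:ℝ):ℂ) else (0:ℂ)))
      = (fun i => (((if 0 ≤ hX.eigenvalues i then (1:ℝ) else 0) : ℝ) : ℂ)) := by
    funext i; split_ifs <;> norm_num
  rw [this]

/-- workhorse: Tr(XT) ≤ Tr (X)₊ for any test -/
lemma trace_mul_test_le (hX : X.IsHermitian) (hT : IsTest T) :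
    ((X * T).trace).re ≤ ((Matrix.posPart' X).trace).re := by
  have hP : (Matrix.posPart' X).PosSemidef := by
    rw [posPart'_eq hX]; exact herm_posSemidef hX fun t => le_max_right _ _
  have hN : (Matrix.posPart' X - X).PosSemidef := by
    rw [posPart'_eq hX]
    nth_rewrite 2 [← herm_id hX]
    rw [herm_sub]
    exact herm_posSemidef hX fun t => by simp [le_max_iff]
  have h1 : 0 ≤ (((Matrix.posPart' X - X) * T).trace).re := trace_mul_re_nonneg hN hT.1
  have h2 : 0 ≤ ((Matrix.posPart' X * (1 - T)).trace).re := trace_mul_re_nonneg hP hT.2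
  have e1 : (Matrix.posPart' X - X) * T = Matrix.posPart' X * T - X * T := Matrix.sub_mul _ _ _
  have e2 : Matrix.posPart' X * (1 - T) = Matrix.posPart' X - Matrix.posPart' X * T := by
    rw [Matrix.mul_sub, Matrix.mul_one]
  rw [e1, Matrix.trace_sub, Complex.sub_re] at h1
  rw [e2, Matrix.trace_sub, Complex.sub_re] at h2
  linarith

lemma trace_posPart'_re (hX : X.IsHermitian) :
    ((Matrix.posPart' X).trace).re = ∑ i, max (hX.eigenvalues i) 0 := by
  rw [posPart'_eq hX, herm_trace_re]

lemma trace_mul_projPos (hX : X.IsHermitian) :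
    ((X * hX.projPos).trace).re = ((Matrix.posPart' X).trace).re := by
  rw [projPos_eq, trace_mul_herm_re, trace_posPart'_re hX]
  apply Finset.sum_congr rfl
  intro i _
  rcases lt_or_ge 0 (hX.eigenvalues i) with h | h
  · rw [if_pos h, max_eq_left h.le]; ring
  · rw [if_neg (not_lt.mpr h), max_eq_right h]; ring

lemma trace_mul_projNonneg (hX : X.IsHermitian) :
    ((X * hX.projNonneg).trace).re = ((Matrix.posPart' X).trace).re := by
  rw [projNonneg_eq, trace_mul_herm_re, trace_posPart'_re hX]
  apply Finset.sum_congr rfl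
  intro i _
  rcases le_or_gt 0 (hX.eigenvalues i) with h | h
  · rw [if_pos h, max_eq_left h]; ring
  · rw [if_neg (not_le.mpr h), max_eq_right h.le]; ring

lemma isTest_projPos (hX : X.IsHermitian) : IsTest hX.projPos := by
  rw [projPos_eq]
  exact isTest_herm hX (fun t => by positivity) (fun t => by split_ifs <;> norm_num)

lemma isTest_projNonneg (hX : X.IsHermitian) : IsTest hX.projNonneg := by
  rw [projNonneg_eq]
  exact isTest_herm hX (fun t => by positivity) (fun t => by split_ifs <;> norm_num)

end HypTest
end Aux
noncomputable section Aux2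
namespace HypTest

open scoped ComplexOrder Matrix

variable {d : ℕ} {ρ σ A T T₁ T₂ : Matrix (Fin d) (Fin d) ℂ}

lemma smul_isHermitian (hρ : ρ.IsHermitian) (c : ℝ) : ((c:ℂ) • ρ).IsHermitian := by
  unfold Matrix.IsHermitian
  rw [Matrix.conjTranspose_smul, Complex.star_def, Complex.conj_ofReal, hρ.eq]

lemma Xm_isHermitian (hρ : ρ.PosSemidef) (hσ : σ.PosSemidef) (lam : ℝ) :
    ((lam:ℂ) • ρ - σ).IsHermitian := (smul_isHermitian hρ.1 lam).sub hσ.1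

lemma psd_real_smul (hA : A.PosSemidef) {c : ℝ} (hc : 0 ≤ c) : ((c:ℂ) • A).PosSemidef := by
  exact hA.smul (Complex.zero_le_real.mpr hc)

lemma isTest_one : IsTest (1 : Matrix (Fin d) (Fin d) ℂ) := by
  constructor
  · exact Matrix.PosSemidef.one
  · rw [sub_self]
    exact Matrix.PosSemidef.zero

lemma isTest_combo {s : ℝ} (hs0 : 0 ≤ s) (hs1 : s ≤ 1) (h1 : IsTest T₁) (h2 : IsTest T₂) :
    IsTest ((s:ℂ) • T₁ + (((1-s : ℝ)):ℂ) • T₂) := by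
  constructor
  · exact (psd_real_smul h1.1 hs0).add (psd_real_smul h2.1 (by linarith))
  · have key : (1:Matrix (Fin d) (Fin d) ℂ) - ((s:ℂ) • T₁ + (((1-s : ℝ)):ℂ) • T₂)
        = (s:ℂ) • (1 - T₁) + (((1-s : ℝ)):ℂ) • (1 - T₂) := by
      push_cast
      module
    rw [key]
    exact (psd_real_smul h1.2 hs0).add (psd_real_smul h2.2 (by linarith))

lemma trace_mul_smul_add_re (A : Matrix (Fin d) (Fin d) ℂ) (s : ℝ)
    (T₁ T₂ : Matrix (Fin d) (Fin d) ℂ) :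
    ((A * ((s:ℂ) • T₁ + (((1-s : ℝ)):ℂ) • T₂)).trace).re
      = s * ((A * T₁).trace).re + (1-s) * ((A * T₂).trace).re := by
  rw [Matrix.mul_add, Matrix.trace_add, Complex.add_re, mul_smul_comm,
    mul_smul_comm, Matrix.trace_smul, Matrix.trace_smul]
  simp [smul_eq_mul, Complex.mul_re]

lemma trace_sub_mul_re (lam : ℝ) (T : Matrix (Fin d) (Fin d) ℂ) :
    ((((lam:ℂ) • ρ - σ) * T).trace).re
      = lam * ((ρ * T).trace).re - ((σ * T).trace).re := by
  rw [Matrix.sub_mul, Matrix.trace_sub, Complex.sub_re, Matrix.smul_mul, Matrix.trace_smul]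
  simp [smul_eq_mul, Complex.mul_re]

lemma trace_rho_one_sub (hρ1 : ρ.trace = 1) (T : Matrix (Fin d) (Fin d) ℂ) :
    ((ρ * (1 - T)).trace).re = 1 - ((ρ * T).trace).re := by
  rw [Matrix.mul_sub, Matrix.mul_one, Matrix.trace_sub, Complex.sub_re, hρ1]
  norm_num

lemma trace_rho_test_le_one (hρ : ρ.PosSemidef) (hρ1 : ρ.trace = 1) (hT : IsTest T) :
    ((ρ * T).trace).re ≤ 1 := by
  have h := trace_mul_re_nonneg hρ hT.2
  rw [trace_rho_one_sub hρ1] at h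
  linarith

/-- the function `F` -/
def Fv (ρ σ : Matrix (Fin d) (Fin d) ℂ) (lam : ℝ) : ℝ :=
  ((Matrix.posPart' ((lam:ℂ) • ρ - σ)).trace).re

def phiv (hρ : ρ.PosSemidef) (hσ : σ.PosSemidef) (lam : ℝ) : ℝ :=
  ((ρ * (Xm_isHermitian hρ hσ lam).projPos).trace).re

def psiv (hρ : ρ.PosSemidef) (hσ : σ.PosSemidef) (lam : ℝ) : ℝ :=
  ((ρ * (Xm_isHermitian hρ hσ lam).projNonneg).trace).re

lemma phiv_nonneg (hρ : ρ.PosSemidef) (hσ : σ.PosSemidef) (lam : ℝ) : 0 ≤ phiv hρ hσ lam :=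
  trace_mul_re_nonneg hρ (isTest_projPos _).1

lemma psiv_nonneg (hρ : ρ.PosSemidef) (hσ : σ.PosSemidef) (lam : ℝ) : 0 ≤ psiv hρ hσ lam :=
  trace_mul_re_nonneg hρ (isTest_projNonneg _).1

lemma phiv_le_one (hρ : ρ.PosSemidef) (hσ : σ.PosSemidef) (hρ1 : ρ.trace = 1) (lam : ℝ) : phiv hρ hσ lam ≤ 1 :=
  trace_rho_test_le_one hρ hρ1 (isTest_projPos _)

lemma psiv_le_one (hρ : ρ.PosSemidef) (hσ : σ.PosSemidef) (hρ1 : ρ.trace = 1) (lam : ℝ) : psiv hρ hσ lam ≤ 1 :=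
  trace_rho_test_le_one hρ hρ1 (isTest_projNonneg _)

lemma slope_le (hρ : ρ.PosSemidef) (hσ : σ.PosSemidef) {μ lam : ℝ} (h : μ ≤ lam) :
    Fv ρ σ lam - Fv ρ σ μ ≤ (lam - μ) * phiv hρ hσ lam := by
  have hXl := Xm_isHermitian hρ hσ lam
  have e1 : Fv ρ σ lam = lam * phiv hρ hσ lam
      - ((σ * (Xm_isHermitian hρ hσ lam).projPos).trace).re := by
    rw [Fv, ← trace_mul_projPos hXl, trace_sub_mul_re]
    rfl
  have e2 : μ * phiv hρ hσ lam
      - ((σ * (Xm_isHermitian hρ hσ lam).projPos).trace).re ≤ Fv ρ σ μ := by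
    have := trace_mul_test_le (Xm_isHermitian hρ hσ μ) (isTest_projPos hXl)
    rw [trace_sub_mul_re] at this
    exact this
  have e3 : (lam - μ) * phiv hρ hσ lam = lam * phiv hρ hσ lam - μ * phiv hρ hσ lam := by ring
  linarith

lemma slope_ge (hρ : ρ.PosSemidef) (hσ : σ.PosSemidef) {μ lam : ℝ} (h : μ ≤ lam) :
    (lam - μ) * psiv hρ hσ μ ≤ Fv ρ σ lam - Fv ρ σ μ := by
  have hXm := Xm_isHermitian hρ hσ μ
  have e1 : Fv ρ σ μ = μ * psiv hρ hσ μ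
      - ((σ * (Xm_isHermitian hρ hσ μ).projNonneg).trace).re := by
    rw [Fv, ← trace_mul_projNonneg hXm, trace_sub_mul_re]
    rfl
  have e2 : lam * psiv hρ hσ μ
      - ((σ * (Xm_isHermitian hρ hσ μ).projNonneg).trace).re ≤ Fv ρ σ lam := by
    have := trace_mul_test_le (Xm_isHermitian hρ hσ lam) (isTest_projNonneg hXm)
    rw [trace_sub_mul_re] at this
    exact this
  have e3 : (lam - μ) * psiv hρ hσ μ = lam * psiv hρ hσ μ - μ * psiv hρ hσ μ := by ring
  linarith

lemma Fv_nonneg (hρ : ρ.PosSemidef) (hσ : σ.PosSemidef) (lam : ℝ) : 0 ≤ Fv ρ σ lam := by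
  apply psd_trace_re_nonneg
  rw [posPart'_eq (Xm_isHermitian hρ hσ lam)]
  exact herm_posSemidef _ fun t => le_max_right _ _

lemma Fv_lb (hρ : ρ.PosSemidef) (hσ : σ.PosSemidef) (hρ1 : ρ.trace = 1) (hσ1 : σ.trace = 1) (lam : ℝ) : lam - 1 ≤ Fv ρ σ lam := by
  have := trace_mul_test_le (Xm_isHermitian hρ hσ lam) (isTest_one (d := d))
  rw [trace_sub_mul_re, Matrix.mul_one, Matrix.mul_one, hρ1, hσ1] at this
  simpa [Fv] using this

lemma Fv_zero (hρ : ρ.PosSemidef) (hσ : σ.PosSemidef) : Fv ρ σ 0 = 0 := by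
  have hX := Xm_isHermitian hρ hσ 0
  rw [Fv, trace_posPart'_re hX]
  apply Finset.sum_eq_zero
  intro i _
  have hev : hX.eigenvalues i ≤ 0 := by
    rw [hX.eigenvalues_eq i]
    set v := ⇑(hX.eigenvectorBasis i)
    have hmv : (((0:ℝ):ℂ) • ρ - σ) *ᵥ v = -(σ *ᵥ v) := by
      simp [Matrix.sub_mulVec, Matrix.neg_mulVec]
    rw [hmv, dotProduct_neg, map_neg]
    have := hσ.re_dotProduct_nonneg v
    simpa using this
  rw [max_eq_right hev]

/-- total trace identity: Σ eigenvalues = lam - 1 -/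
lemma sum_eigenvalues (hρ : ρ.PosSemidef) (hσ : σ.PosSemidef) (hρ1 : ρ.trace = 1) (hσ1 : σ.trace = 1) (lam : ℝ) :
    ∑ i, (Xm_isHermitian hρ hσ lam).eigenvalues i = lam - 1 := by
  have hX := Xm_isHermitian hρ hσ lam
  have h1 : (((lam:ℂ) • ρ - σ)).trace = ∑ i, ((hX.eigenvalues i : ℂ)) := by
    conv_lhs => rw [← herm_id hX]
    exact herm_trace hX _
  have h2 : (((lam:ℂ) • ρ - σ)).trace = (lam:ℂ) - 1 := by
    rw [Matrix.trace_sub, Matrix.trace_smul, hρ1, hσ1]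
    simp
  rw [h2] at h1
  have := congrArg Complex.re h1
  rw [Complex.re_sum] at this
  simpa using this.symm

lemma Fv_eq_half (hρ : ρ.PosSemidef) (hσ : σ.PosSemidef) (hρ1 : ρ.trace = 1) (hσ1 : σ.trace = 1) (lam : ℝ) :
    Fv ρ σ lam = ((lam - 1) + Matrix.traceNorm ((lam:ℂ) • ρ - σ)) / 2 := by
  have hX := Xm_isHermitian hρ hσ lam
  rw [Fv, trace_posPart'_re hX, traceNorm_eq hX, ← sum_eigenvalues hρ hσ hρ1 hσ1 lam,
    ← Finset.sum_add_distrib, Finset.sum_div]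
  apply Finset.sum_congr rfl
  intro i _
  rw [max_def]
  split_ifs with h
  · rw [abs_of_nonpos (by linarith)]; ring
  · rw [abs_of_pos (by push_neg at h; linarith)]; ring

end HypTest
end Aux2
noncomputable section Aux3
namespace HypTest
open scoped ComplexOrder Matrix
variable {d : ℕ} {ρ σ : Matrix (Fin d) (Fin d) ℂ}

lemma isTest_zero : IsTest (0 : Matrix (Fin d) (Fin d) ℂ) := by
  constructor
  · exact Matrix.PosSemidef.zero
  · rw [sub_zero]; exact Matrix.PosSemidef.one

lemma sigma_projPos (hρ : ρ.PosSemidef) (hσ : σ.PosSemidef) (lam : ℝ) :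
    ((σ * (Xm_isHermitian hρ hσ lam).projPos).trace).re
      = lam * phiv hρ hσ lam - Fv ρ σ lam := by
  have h1 := trace_mul_projPos (Xm_isHermitian hρ hσ lam)
  rw [trace_sub_mul_re] at h1
  have h2 : ((Matrix.posPart' ((lam:ℂ) • ρ - σ)).trace).re = Fv ρ σ lam := rfl
  have h3 : ((ρ * (Xm_isHermitian hρ hσ lam).projPos).trace).re = phiv hρ hσ lam := rfl
  rw [h2, h3] at h1
  linarith

lemma sigma_projNonneg (hρ : ρ.PosSemidef) (hσ : σ.PosSemidef) (lam : ℝ) :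
    ((σ * (Xm_isHermitian hρ hσ lam).projNonneg).trace).re
      = lam * psiv hρ hσ lam - Fv ρ σ lam := by
  have h1 := trace_mul_projNonneg (Xm_isHermitian hρ hσ lam)
  rw [trace_sub_mul_re] at h1
  have h2 : ((Matrix.posPart' ((lam:ℂ) • ρ - σ)).trace).re = Fv ρ σ lam := rfl
  have h3 : ((ρ * (Xm_isHermitian hρ hσ lam).projNonneg).trace).re = psiv hρ hσ lam := rfl
  rw [h2, h3] at h1
  linarith

end HypTest
end Aux3
open scoped ComplexOrder Matrix
open HypTest in
set_option maxHeartbeats 2000000 in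
/-- Strong LP duality for the optimal type II error: for density matrices `ρ, σ` and
`ε ∈ (0,1)`, `β_ε = sup_{λ≥0} {(1-ε)λ - Tr(λρ - σ)₊} = sup_{λ≥0} {(λ+1)/2 - ½‖λρ-σ‖₁ - λε}`. -/
theorem stmt_14 {d : ℕ} {ρ σ : Matrix (Fin d) (Fin d) ℂ}
    (hρ : ρ.PosSemidef) (hσ : σ.PosSemidef) (hρ1 : ρ.trace = 1) (hσ1 : σ.trace = 1)
    (ε : ℝ) (hε : ε ∈ Set.Ioo (0:ℝ) 1) :
    sInf {y : ℝ | ∃ T : Matrix (Fin d) (Fin d) ℂ,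
        T.PosSemidef ∧ (1 - T).PosSemidef ∧ ((ρ * (1 - T)).trace).re ≤ ε ∧
        y = ((σ * T).trace).re}
      = sSup {y : ℝ | ∃ lam : ℝ, 0 ≤ lam ∧
          y = (1 - ε) * lam - ((Matrix.posPart' ((lam:ℂ) • ρ - σ)).trace).re} ∧
    sInf {y : ℝ | ∃ T : Matrix (Fin d) (Fin d) ℂ,
        T.PosSemidef ∧ (1 - T).PosSemidef ∧ ((ρ * (1 - T)).trace).re ≤ ε ∧
        y = ((σ * T).trace).re}
      = sSup {y : ℝ | ∃ lam : ℝ, 0 ≤ lam ∧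
          y = (lam + 1) / 2 - (1/2) * Matrix.traceNorm ((lam:ℂ) • ρ - σ) - lam * ε} := by
  obtain ⟨hε0, hε1⟩ := hε
  set P : Set ℝ := {y : ℝ | ∃ T : Matrix (Fin d) (Fin d) ℂ,
      T.PosSemidef ∧ (1 - T).PosSemidef ∧ ((ρ * (1 - T)).trace).re ≤ ε ∧
      y = ((σ * T).trace).re} with hPdef
  set D : Set ℝ := {y : ℝ | ∃ lam : ℝ, 0 ≤ lam ∧
      y = (1 - ε) * lam - ((Matrix.posPart' ((lam:ℂ) • ρ - σ)).trace).re} with hDdef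
  set D2 : Set ℝ := {y : ℝ | ∃ lam : ℝ, 0 ≤ lam ∧
      y = (lam + 1) / 2 - (1/2) * Matrix.traceNorm ((lam:ℂ) • ρ - σ) - lam * ε} with hD2def
  -- the two dual sets agree
  have hDeq : D2 = D := by
    ext y
    simp only [hDdef, hD2def, Set.mem_setOf_eq]
    have key : ∀ l : ℝ, (l + 1) / 2 - (1/2) * Matrix.traceNorm ((l:ℂ) • ρ - σ) - l * ε
        = (1 - ε) * l - ((Matrix.posPart' ((l:ℂ) • ρ - σ)).trace).re := by
      intro l
      have h1 : ((Matrix.posPart' ((l:ℂ) • ρ - σ)).trace).re = Fv ρ σ l := rfl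
      rw [h1, Fv_eq_half hρ hσ hρ1 hσ1 l]
      ring
    constructor
    · rintro ⟨l, hl, rfl⟩
      exact ⟨l, hl, key l⟩
    · rintro ⟨l, hl, rfl⟩
      exact ⟨l, hl, (key l).symm⟩
  -- primal membership of the trivial test `T = 1`
  have hPone : (1:ℝ) ∈ P := by
    refine ⟨1, Matrix.PosSemidef.one, by rw [sub_self]; exact Matrix.PosSemidef.zero, ?_, ?_⟩
    · rw [sub_self, Matrix.mul_zero, Matrix.trace_zero]
      simpa using hε0.le
    · rw [Matrix.mul_one, hσ1]
      simp
  have hPlb : ∀ y ∈ P, (0:ℝ) ≤ y := by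
    rintro y ⟨T, h1, h2, h3, rfl⟩
    exact trace_mul_re_nonneg hσ h1
  have hbddP : BddBelow P := ⟨0, fun y hy => hPlb y hy⟩
  -- weak duality
  have hweak : ∀ y ∈ D, ∀ z ∈ P, y ≤ z := by
    rintro y ⟨l, hl, rfl⟩ z ⟨T, hT1, hT2, hT3, rfl⟩
    have ha : 1 - ε ≤ ((ρ * T).trace).re := by
      rw [trace_rho_one_sub hρ1 T] at hT3
      linarith
    have hle := trace_mul_test_le (Xm_isHermitian hρ hσ l) ⟨hT1, hT2⟩
    rw [trace_sub_mul_re] at hle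
    have h2 : ((Matrix.posPart' ((l:ℂ) • ρ - σ)).trace).re = Fv ρ σ l := rfl
    rw [h2] at hle ⊢
    nlinarith
  have hD0 : (0:ℝ) ∈ D := by
    refine ⟨0, le_refl 0, ?_⟩
    have h1 : ((Matrix.posPart' (((0:ℝ):ℂ) • ρ - σ)).trace).re = Fv ρ σ 0 := rfl
    rw [h1, Fv_zero hρ hσ]
    ring
  have hbddD : BddAbove D := ⟨1, fun y hy => hweak y hy 1 hPone⟩
  -- Lipschitz continuity of F
  have hlip : ∀ a b : ℝ, b ≤ a → 0 ≤ Fv ρ σ a - Fv ρ σ b ∧ Fv ρ σ a - Fv ρ σ b ≤ a - b := by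
    intro a b h
    have h1 := slope_le hρ hσ h
    have h2 := slope_ge hρ hσ h
    have h3 := phiv_le_one hρ hσ hρ1 a
    have h4 := phiv_nonneg hρ hσ a
    have h5 := psiv_nonneg hρ hσ b
    constructor
    · nlinarith
    · nlinarith
  have hFcont : Continuous (Fv ρ σ) := by
    apply LipschitzWith.continuous (K := 1)
    apply LipschitzWith.of_dist_le_mul
    intro a b
    rw [Real.dist_eq, Real.dist_eq, NNReal.coe_one, one_mul]
    rcases le_total b a with h | h
    · obtain ⟨ha1, ha2⟩ := hlip a b h
      rw [abs_of_nonneg ha1, abs_of_nonneg (by linarith)]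
      linarith
    · obtain ⟨ha1, ha2⟩ := hlip b a h
      rw [abs_sub_comm, abs_sub_comm a b, abs_of_nonneg ha1, abs_of_nonneg (by linarith)]
      linarith
  have hgcont : Continuous (fun l : ℝ => (1-ε)*l - Fv ρ σ l) :=
    (continuous_const.mul continuous_id).sub hFcont
  obtain ⟨lam0, hlam0mem, hlam0max⟩ :=
    (isCompact_Icc (a := (0:ℝ)) (b := 1/ε)).exists_isMaxOn
      ⟨0, Set.mem_Icc.mpr ⟨le_refl 0, by positivity⟩⟩ hgcont.continuousOn
  have hlam00 : 0 ≤ lam0 := hlam0mem.1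
  have hglobal : ∀ l : ℝ, 0 ≤ l →
      (1-ε)*l - Fv ρ σ l ≤ (1-ε)*lam0 - Fv ρ σ lam0 := by
    intro l hl
    rcases le_or_gt l (1/ε) with h | h
    · exact hlam0max (Set.mem_Icc.mpr ⟨hl, h⟩)
    · have h1 : 1 < l * ε := (div_lt_iff₀ hε0).mp h
      have h2 := Fv_lb hρ hσ hρ1 hσ1 l
      have h3 : (0:ℝ) ≤ (1-ε)*lam0 - Fv ρ σ lam0 := by
        have h4 := hlam0max (Set.mem_Icc.mpr ⟨le_refl 0, by positivity⟩)
        simp only [Set.mem_setOf_eq] at h4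
        have h5 : (1-ε)*(0:ℝ) - Fv ρ σ 0 = 0 := by rw [Fv_zero hρ hσ]; ring
        linarith
      nlinarith
  -- key approximation lemma
  have hkey : ∀ δ : ℝ, 0 < δ → sInf P ≤ ((1-ε)*lam0 - Fv ρ σ lam0) + 2*δ := by
    intro δ hδ
    -- the right point ν = lam0 + δ has φ ν ≥ 1 - ε
    have hφν : 1 - ε ≤ phiv hρ hσ (lam0 + δ) := by
      have h1 := hglobal (lam0 + δ) (by linarith)
      have h2 := slope_le hρ hσ (show lam0 ≤ lam0 + δ by linarith)
      rw [show lam0 + δ - lam0 = δ from by ring] at h2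
      nlinarith
    have ha1 : phiv hρ hσ (lam0 + δ) ≤ 1 := phiv_le_one hρ hσ hρ1 (lam0 + δ)
    have ha0 : 0 ≤ phiv hρ hσ (lam0 + δ) := phiv_nonneg hρ hσ (lam0 + δ)
    have hσPν : ((σ * (Xm_isHermitian hρ hσ (lam0 + δ)).projPos).trace).re
        = (lam0 + δ) * phiv hρ hσ (lam0 + δ) - Fv ρ σ (lam0 + δ) := sigma_projPos hρ hσ _
    have hρPν : ((ρ * (Xm_isHermitian hρ hσ (lam0 + δ)).projPos).trace).re
        = phiv hρ hσ (lam0 + δ) := rfl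
    by_cases hl0 : lam0 = 0
    · -- case lam0 = 0 : scale the projector
      have hφpos : 0 < phiv hρ hσ (lam0 + δ) := by linarith
      set c : ℝ := (1-ε)/phiv hρ hσ (lam0 + δ) with hc
      have hc0 : 0 ≤ c := div_nonneg (by linarith) hφpos.le
      have hc1 : c ≤ 1 := (div_le_one hφpos).mpr hφν
      set T := (c:ℂ) • (Xm_isHermitian hρ hσ (lam0 + δ)).projPos
          + (((1-c : ℝ)):ℂ) • (0 : Matrix (Fin d) (Fin d) ℂ) with hT
      have hTtest : IsTest T :=
        isTest_combo hc0 hc1 (isTest_projPos (Xm_isHermitian hρ hσ (lam0 + δ))) isTest_zero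
      have hcφ : c * phiv hρ hσ (lam0 + δ) = 1-ε := div_mul_cancel₀ _ hφpos.ne'
      have hρT : ((ρ * T).trace).re = 1 - ε := by
        rw [hT, trace_mul_smul_add_re, hρPν, Matrix.mul_zero, Matrix.trace_zero]
        simpa using hcφ
      have hfeas : ((ρ * (1 - T)).trace).re ≤ ε := by
        rw [trace_rho_one_sub hρ1, hρT]; linarith
      have hval : ((σ * T).trace).re ≤ ((1-ε)*lam0 - Fv ρ σ lam0) + 2*δ := by
        rw [hT, trace_mul_smul_add_re, hσPν, Matrix.mul_zero, Matrix.trace_zero]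
        have hF0 : Fv ρ σ lam0 = 0 := by rw [hl0]; exact Fv_zero hρ hσ
        have hFν0 : 0 ≤ Fv ρ σ (lam0 + δ) := Fv_nonneg hρ hσ _
        simp only [Complex.zero_re, mul_zero, add_zero]
        have e1 : c * ((lam0 + δ) * phiv hρ hσ (lam0 + δ) - Fv ρ σ (lam0 + δ))
            = (lam0 + δ)*(c * phiv hρ hσ (lam0 + δ)) - c * Fv ρ σ (lam0 + δ) := by ring
        rw [e1, hcφ, hF0]
        nlinarith [mul_nonneg hc0 hFν0, hl0, mul_nonneg hδ.le hε0.le]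
      calc sInf P ≤ ((σ * T).trace).re := csInf_le hbddP ⟨T, hTtest.1, hTtest.2, hfeas, rfl⟩
        _ ≤ _ := hval
    · -- case lam0 > 0 : mix the two Neyman–Pearson tests
      have hl0' : 0 < lam0 := lt_of_le_of_ne hlam00 (Ne.symm hl0)
      set δ' := min δ lam0 with hδ'
      have hδ'0 : 0 < δ' := lt_min hδ hl0'
      have hδ'δ : δ' ≤ δ := min_le_left _ _
      have hμ0 : 0 ≤ lam0 - δ' := by
        have := min_le_right δ lam0; linarith
      have hμlam : lam0 - δ' ≤ lam0 := by linarith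
      set a := phiv hρ hσ (lam0 + δ) with haof
      set b := psiv hρ hσ (lam0 - δ') with hbof
      have hb0 : 0 ≤ b := psiv_nonneg hρ hσ _
      have hb1 : b ≤ 1 - ε := by
        have h1 := hglobal (lam0 - δ') hμ0
        have h2 := slope_ge hρ hσ hμlam
        rw [show lam0 - (lam0 - δ') = δ' from by ring] at h2
        nlinarith
      have hab : b ≤ a := le_trans hb1 hφν
      set s : ℝ := (a - (1-ε))/(a - b) with hs
      have hs0 : 0 ≤ s := by
        rcases eq_or_lt_of_le hab with h | h
        · rw [hs, ← h, sub_self, div_zero]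
        · exact div_nonneg (by linarith) (by linarith)
      have hs1 : s ≤ 1 := by
        rcases eq_or_lt_of_le hab with h | h
        · rw [hs, ← h, sub_self, div_zero]; norm_num
        · rw [hs, div_le_one (by linarith)]; linarith
      have hsc : s*b + (1-s)*a = 1-ε := by
        rcases eq_or_lt_of_le hab with h | h
        · rw [hs, ← h, sub_self, div_zero]
          have h2 : b = 1-ε := le_antisymm hb1 (by rw [h]; exact hφν)
          rw [h2]; ring
        · have hne : a - b ≠ 0 := sub_ne_zero.mpr (ne_of_gt h)
          rw [hs]; field_simp; ring
      set T := (s:ℂ) • (Xm_isHermitian hρ hσ (lam0 - δ')).projNonneg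
          + (((1-s : ℝ)):ℂ) • (Xm_isHermitian hρ hσ (lam0 + δ)).projPos with hT
      have hTtest : IsTest T := isTest_combo hs0 hs1
        (isTest_projNonneg (Xm_isHermitian hρ hσ (lam0 - δ')))
        (isTest_projPos (Xm_isHermitian hρ hσ (lam0 + δ)))
      have hρQμ : ((ρ * (Xm_isHermitian hρ hσ (lam0 - δ')).projNonneg).trace).re = b := rfl
      have hρT : ((ρ * T).trace).re = 1 - ε := by
        rw [hT, trace_mul_smul_add_re, hρQμ, hρPν, hsc]
      have hfeas : ((ρ * (1 - T)).trace).re ≤ ε := by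
        rw [trace_rho_one_sub hρ1, hρT]; linarith
      have hσQμ : ((σ * (Xm_isHermitian hρ hσ (lam0 - δ')).projNonneg).trace).re
          = (lam0 - δ') * b - Fv ρ σ (lam0 - δ') := sigma_projNonneg hρ hσ _
      clear_value δ' a b s
      have hval : ((σ * T).trace).re ≤ ((1-ε)*lam0 - Fv ρ σ lam0) + 2*δ := by
        rw [hT, trace_mul_smul_add_re, hσQμ, hσPν]
        have hFμ : Fv ρ σ lam0 - Fv ρ σ (lam0 - δ') ≤ δ' := by
          have h2 := slope_le hρ hσ hμlam
          rw [show lam0 - (lam0 - δ') = δ' from by ring] at h2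
          have h3 := phiv_le_one hρ hσ hρ1 lam0
          have h4 := phiv_nonneg hρ hσ lam0
          nlinarith
        have hFν : Fv ρ σ lam0 ≤ Fv ρ σ (lam0 + δ) := by
          have h2 := slope_ge hρ hσ (show lam0 ≤ lam0 + δ by linarith)
          have h5 := psiv_nonneg hρ hσ lam0
          nlinarith
        have e1 : s*((lam0 - δ')*b - Fv ρ σ (lam0 - δ'))
            ≤ s*(lam0*b - Fv ρ σ lam0 + δ') := by
          apply mul_le_mul_of_nonneg_left _ hs0
          nlinarith [mul_nonneg hδ'0.le hb0]
        have e2 : (1-s)*((lam0 + δ)*a - Fv ρ σ (lam0 + δ))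
            ≤ (1-s)*(lam0*a + δ - Fv ρ σ lam0) := by
          apply mul_le_mul_of_nonneg_left _ (by linarith)
          have hδa : δ*a ≤ δ := by nlinarith
          nlinarith
        have e3 : s*(lam0*b - Fv ρ σ lam0 + δ') + (1-s)*(lam0*a + δ - Fv ρ σ lam0)
            = lam0*(s*b + (1-s)*a) - Fv ρ σ lam0 + (s*δ' + (1-s)*δ) := by ring
        rw [hsc] at e3
        have e4 : s*δ' + (1-s)*δ ≤ 2*δ := by nlinarith [mul_le_mul_of_nonneg_left hδ'δ hs0]
        nlinarith [e1, e2, e3, e4]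
      calc sInf P ≤ ((σ * T).trace).re := csInf_le hbddP ⟨T, hTtest.1, hTtest.2, hfeas, rfl⟩
        _ ≤ _ := hval
  -- strong duality
  have hstrong : sInf P ≤ sSup D := by
    apply le_of_forall_pos_le_add
    intro η hη
    have h1 := hkey (η/2) (by positivity)
    have h2 : (1-ε)*lam0 - Fv ρ σ lam0 ≤ sSup D := by
      apply le_csSup hbddD
      exact ⟨lam0, hlam00, rfl⟩
    linarith
  have hge : sSup D ≤ sInf P :=
    le_csInf ⟨1, hPone⟩ fun z hz => csSup_le ⟨0, hD0⟩ fun y hy => hweak y hy z hz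
  have hmain : sInf P = sSup D := le_antisymm hstrong hge
  exact ⟨hmain, by rw [hDeq]; exact hmain⟩
end

section
/- For 0 ≤ z ≤ 1 and fixed n > 0, the function x ↦ I_z(n−x, x) is monotone increasing in x for 0 ≤ x ≤ n, where I_z(a,b) = B(z,a,b)/B(a,b) is the regularised incomplete beta function with B(z,a,b) = ∫₀^z t^{a−1}(1−t)^{b−1} dt and B(a,b) = B(1,a,b). -/
open MeasureTheory Set

namespace Stmt18Aux

lemma intInt_left {a b : ℝ} (ha : 0 < a) :
    IntervalIntegrable (fun t : ℝ => t ^ (a - 1) * (1 - t) ^ (b - 1)) volume 0 (1/2) := by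
  apply IntervalIntegrable.mul_continuousOn
  · exact intervalIntegral.intervalIntegrable_rpow' (by linarith)
  · apply continuousOn_of_forall_continuousAt
    intro x hx
    rw [uIcc_of_le (by norm_num : (0:ℝ) ≤ 1/2)] at hx
    have h1 : (1 : ℝ) - x ≠ 0 := by
      have := hx.2; intro h; rw [sub_eq_zero] at h; rw [← h] at this; norm_num at this
    exact (continuous_const.sub continuous_id).continuousAt.rpow_const (Or.inl h1)

lemma intInt01 {a b : ℝ} (ha : 0 < a) (hb : 0 < b) :
    IntervalIntegrable (fun t : ℝ => t ^ (a - 1) * (1 - t) ^ (b - 1)) volume 0 1 := by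
  refine (intInt_left (b := b) ha).trans ?_
  rw [IntervalIntegrable.iff_comp_neg]
  convert ((intInt_left (b := a) hb).comp_add_right 1).symm using 1
  · ext1 x
    have e1 : (1:ℝ) - -x = x + 1 := by ring
    have e2 : (1:ℝ) - (x + 1) = -x := by ring
    rw [e1, e2, mul_comm]
  · norm_num
  · norm_num

lemma core {n x y t u : ℝ} (hxy : x ≤ y) (ht : 0 < t) (htu : t ≤ u) (hu : u < 1) :
    (u ^ (n - y - 1) * (1 - u) ^ (y - 1)) * (t ^ (n - x - 1) * (1 - t) ^ (x - 1)) ≤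
    (u ^ (n - x - 1) * (1 - u) ^ (x - 1)) * (t ^ (n - y - 1) * (1 - t) ^ (y - 1)) := by
  have hu0 : 0 < u := ht.trans_le htu
  have h1u : 0 < 1 - u := by linarith
  have h1t : 0 < 1 - t := by linarith
  set d := y - x with hd
  have hd0 : 0 ≤ d := by simp [hd]; linarith
  have key : ∀ s : ℝ, 0 < s → 0 < 1 - s →
      s ^ (n - y - 1) * (1 - s) ^ (y - 1)
        = (s ^ (n - x - 1) * (1 - s) ^ (x - 1)) * ((1 - s) / s) ^ d := by
    intro s hs h1s
    rw [Real.div_rpow h1s.le hs.le,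
        show n - y - 1 = (n - x - 1) + (-d) by rw [hd]; ring,
        show y - 1 = (x - 1) + d by rw [hd]; ring,
        Real.rpow_add hs, Real.rpow_add h1s, Real.rpow_neg hs.le]
    have hsd : s ^ d ≠ 0 := (Real.rpow_pos_of_pos hs d).ne'
    field_simp
  rw [key t ht h1t, key u hu0 h1u]
  have hr : ((1 - u) / u) ^ d ≤ ((1 - t) / t) ^ d := by
    apply Real.rpow_le_rpow (by positivity) _ hd0
    rw [div_le_div_iff₀ hu0 ht]
    nlinarith
  have h1 : 0 ≤ u ^ (n - x - 1) * (1 - u) ^ (x - 1) := by positivity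
  have h2 : 0 ≤ t ^ (n - x - 1) * (1 - t) ^ (x - 1) := by positivity
  nlinarith [mul_le_mul_of_nonneg_left hr (mul_nonneg h1 h2)]

end Stmt18Aux

/-- For `0 ≤ z ≤ 1` and `n > 0`, the regularised incomplete beta function
`x ↦ I_z(n-x, x) = B(z, n-x, x)/B(n-x, x)` is monotone increasing in the real variable
`x ∈ (0, n)`. -/
theorem stmt_18 (z : ℝ) (hz : z ∈ Set.Icc (0:ℝ) 1) (n : ℝ) (hn : 0 < n) :
    MonotoneOn (fun x : ℝ =>
      (∫ t in (0:ℝ)..z, t ^ (n - x - 1) * (1 - t) ^ (x - 1)) /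
        (∫ t in (0:ℝ)..1, t ^ (n - x - 1) * (1 - t) ^ (x - 1)))
      (Set.Ioo 0 n) := by
  obtain ⟨hz0, hz1⟩ := hz
  intro x hx y hy hxy
  obtain ⟨hx0, hxn⟩ := hx
  obtain ⟨hy0, hyn⟩ := hy
  simp only
  set f : ℝ → ℝ → ℝ := fun x t => t ^ (n - x - 1) * (1 - t) ^ (x - 1) with hfdef
  have hIx : IntervalIntegrable (f x) volume 0 1 := Stmt18Aux.intInt01 (by linarith) hx0
  have hIy : IntervalIntegrable (f y) volume 0 1 := Stmt18Aux.intInt01 (by linarith) hy0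
  have hsub1 : uIcc (0:ℝ) z ⊆ uIcc (0:ℝ) 1 := by
    rw [uIcc_of_le hz0, uIcc_of_le zero_le_one]; exact Icc_subset_Icc le_rfl hz1
  have hsub2 : uIcc z (1:ℝ) ⊆ uIcc (0:ℝ) 1 := by
    rw [uIcc_of_le hz1, uIcc_of_le zero_le_one]; exact Icc_subset_Icc hz0 le_rfl
  have hIxz := hIx.mono_set hsub1
  have hIyz := hIy.mono_set hsub1
  have hIxz1 := hIx.mono_set hsub2
  have hIyz1 := hIy.mono_set hsub2
  have hpos : ∀ w : ℝ, 0 < (∫ t in (0:ℝ)..1, f w t) ∨ True → IntervalIntegrable (f w) volume 0 1 → 0 < ∫ t in (0:ℝ)..1, f w t := by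
    intro w _ hI
    apply intervalIntegral.intervalIntegral_pos_of_pos_on hI _ one_pos
    intro t ht
    have h1 : 0 < t := ht.1
    have h2 : 0 < 1 - t := by linarith [ht.2]
    have := Real.rpow_pos_of_pos h1 (n - w - 1)
    have := Real.rpow_pos_of_pos h2 (w - 1)
    positivity
  have hTx : 0 < ∫ t in (0:ℝ)..1, f x t := hpos x (Or.inr trivial) hIx
  have hTy : 0 < ∫ t in (0:ℝ)..1, f y t := hpos y (Or.inr trivial) hIy
  have hnn : ∀ w t : ℝ, 0 ≤ t → t ≤ 1 → 0 ≤ f w t := by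
    intro w t h0 h1
    exact mul_nonneg (Real.rpow_nonneg h0 _) (Real.rpow_nonneg (by linarith) _)
  have hBx0 : 0 ≤ ∫ t in (0:ℝ)..z, f x t :=
    intervalIntegral.integral_nonneg hz0 fun t ht => hnn x t ht.1 (ht.2.trans hz1)
  have hBy0 : 0 ≤ ∫ t in (0:ℝ)..z, f y t :=
    intervalIntegral.integral_nonneg hz0 fun t ht => hnn y t ht.1 (ht.2.trans hz1)
  -- Step 1: pointwise (in u) comparison after integrating over t in (0, z)
  have key1 : ∀ u, z ≤ u → u < 1 →
      f y u * ∫ t in (0:ℝ)..z, f x t ≤ f x u * ∫ t in (0:ℝ)..z, f y t := by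
    intro u hzu hu1
    rw [← intervalIntegral.integral_const_mul, ← intervalIntegral.integral_const_mul]
    apply intervalIntegral.integral_mono_ae_restrict hz0 (hIxz.const_mul _) (hIyz.const_mul _)
    have h0 : ∀ᵐ t : ℝ ∂(volume.restrict (Icc (0:ℝ) z)), t ≠ 0 := by
      refine ae_restrict_of_ae ?_
      rw [ae_iff]
      convert measure_singleton (0:ℝ) using 2
      · ext t; simp
      · infer_instance
    filter_upwards [h0, ae_restrict_mem measurableSet_Icc] with t ht0 htm
    have ht : 0 < t := lt_of_le_of_ne htm.1 (Ne.symm ht0)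
    exact Stmt18Aux.core hxy ht (htm.2.trans hzu) hu1
  -- Step 2: integrate over u in (z, 1)
  have key2 : (∫ u in z..(1:ℝ), f y u) * (∫ t in (0:ℝ)..z, f x t)
      ≤ (∫ u in z..(1:ℝ), f x u) * (∫ t in (0:ℝ)..z, f y t) := by
    rw [← intervalIntegral.integral_mul_const, ← intervalIntegral.integral_mul_const]
    apply intervalIntegral.integral_mono_ae_restrict hz1 (hIyz1.mul_const _) (hIxz1.mul_const _)
    have h1 : ∀ᵐ u : ℝ ∂(volume.restrict (Icc z (1:ℝ))), u ≠ 1 := by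
      refine ae_restrict_of_ae ?_
      rw [ae_iff]
      convert measure_singleton (1:ℝ) using 2
      · ext u; simp
      · infer_instance
    filter_upwards [h1, ae_restrict_mem measurableSet_Icc] with u hu1 hum
    exact key1 u hum.1 (lt_of_le_of_ne hum.2 hu1)
  have hsx : (∫ t in (0:ℝ)..z, f x t) + (∫ t in z..(1:ℝ), f x t) = ∫ t in (0:ℝ)..1, f x t :=
    intervalIntegral.integral_add_adjacent_intervals hIxz hIxz1
  have hsy : (∫ t in (0:ℝ)..z, f y t) + (∫ t in z..(1:ℝ), f y t) = ∫ t in (0:ℝ)..1, f y t :=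
    intervalIntegral.integral_add_adjacent_intervals hIyz hIyz1
  rw [div_le_div_iff₀ hTx hTy, ← hsx, ← hsy]
  nlinarith [key2]
end
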